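/- On G = {0,1,2} with addition modulo 3, let ξ_0, ξ_1, ξ_2 be independent Bernoulli(1/2) random variables and let ℚ be the Palm probability measure of the point process ξ = ξ_0 δ_0 + ξ_1 δ_1 + ξ_2 δ_2 (so that under ℚ, ξ{0} = 1 a.s. and ξ{1}, ξ{2} are independent Bernoulli(1/2)). With C := {0,1}, T_C(0,·) the uniform distribution on the atoms of ξ in C, and A := {ξ{1} = 1}, one has 𝔼_ℚ[∫ 1_A(θ_s) T_C(0,ds)] = 3/8 ≠ 1/2 = ℚ(A). Hence a Palm measure need not be invariant under the single kernel T_C. -/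

import Mathlib

open MeasureTheory Set
open scoped ENNReal

instance : MeasurableSpace (ZMod 3) := ⊤
instance : MeasurableSingletonClass (ZMod 3) := ⟨fun _ => trivial⟩

/-- The sample space: configurations of atoms on `ZMod 3`. -/
abbrev Omega3 : Type := ZMod 3 → Bool

/-- The point process: `ξ ω = ∑_x ω_x δ_x`. -/
noncomputable def xi3 (ω : Omega3) : Measure (ZMod 3) :=
  ∑ x : ZMod 3, if ω x then Measure.dirac x else 0

/-- The shift flow on configurations. -/
def theta3 (s : ZMod 3) (ω : Omega3) : Omega3 := fun x => ω (x + s)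

/-- The Palm probability measure of the Bernoulli(1/2) point process on `ZMod 3`:
`ω 0 = true` a.s. and `ω 1`, `ω 2` are independent Bernoulli(1/2). -/
noncomputable def Q3 : Measure Omega3 :=
  Measure.map
    (fun p : Bool × Bool => fun x : ZMod 3 => if x = 0 then true else if x = 1 then p.1 else p.2)
    (((4 : ℝ≥0∞))⁻¹ • Measure.count)

/-- The kernel `T_C(ω,t,·)`: pick a point uniformly in the mass of `ξ(ω)` in `C + t`;
if the mass vanishes, use a fixed probability measure `ν`. -/
noncomputable def massKernelTC {Ω : Type*} {G : Type*} [AddCommGroup G] [MeasurableSpace G]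
    (ξ : Ω → Measure G) (ν : Measure G) (C : Set G) (ω : Ω) (t : G) :
    MeasureTheory.Measure G :=
  if ξ ω ((fun x => x - t) ⁻¹' C) ≠ 0 then
    (ξ ω ((fun x => x - t) ⁻¹' C))⁻¹ • (ξ ω).restrict ((fun x => x - t) ⁻¹' C)
  else ν

/-! ### Auxiliary material -/

instance : MeasurableSingletonClass Omega3 := ⟨fun ω => by
  have h : {ω} = ⋂ x, (fun ω' : Omega3 => ω' x) ⁻¹' {ω x} := by
    ext ω'; simp [funext_iff, eq_comm]
  rw [h]
  exact MeasurableSet.iInter fun x => (measurable_pi_apply x) (MeasurableSet.singleton _)⟩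

/-- The embedding used in the definition of `Q3`. -/
def emb3 (p : Bool × Bool) : Omega3 :=
  fun x : ZMod 3 => if x = 0 then true else if x = 1 then p.1 else p.2

lemma zmod3_sum (f : ZMod 3 → ℝ≥0∞) : ∑ x : ZMod 3, f x = f 0 + f 1 + f 2 := by
  rw [show (Finset.univ : Finset (ZMod 3)) = {0,1,2} by decide]
  rw [Finset.sum_insert (by decide), Finset.sum_insert (by decide), Finset.sum_singleton, add_assoc]

lemma dirac_ite_apply (b : Bool) (x : ZMod 3) (S : Set (ZMod 3)) [Decidable (x ∈ S)] :
    ((if b then Measure.dirac x else 0) : Measure (ZMod 3)) S = if b ∧ x ∈ S then 1 else 0 := by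
  rcases b <;> simp [Measure.dirac_apply, Set.indicator_apply]

open Classical in
lemma xi3_apply (ω : Omega3) (S : Set (ZMod 3)) :
    xi3 ω S = (if ω 0 ∧ 0 ∈ S then 1 else 0) + (if ω 1 ∧ 1 ∈ S then 1 else 0)
      + (if ω 2 ∧ 2 ∈ S then 1 else 0) := by
  rw [xi3, Measure.finset_sum_apply,
    zmod3_sum (fun x => (if ω x then Measure.dirac x else 0) S), dirac_ite_apply,
    dirac_ite_apply, dirac_ite_apply]

/-- The inner integral, for a configuration with an atom at `0`. -/
lemma inner_eq (ω : Omega3) (h0 : ω 0 = true) :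
    (∫⁻ s, Set.indicator {ω' : Omega3 | ω' 1 = true} (fun _ => (1 : ℝ≥0∞)) (theta3 s ω)
        ∂(massKernelTC xi3 (Measure.dirac 0) ({0, 1} : Set (ZMod 3)) ω 0))
      = (xi3 ω {0,1})⁻¹ * xi3 ω ({0,1} ∩ {s | ω (1 + s) = true}) := by
  have hC : ((fun x : ZMod 3 => x - 0) ⁻¹' {0,1}) = ({0,1} : Set (ZMod 3)) := by
    ext x; simp
  have hne : xi3 ω ({0,1} : Set (ZMod 3)) ≠ 0 := by
    classical
    rw [xi3_apply]
    simp [h0]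
  rw [massKernelTC, hC, if_pos hne]
  have hint : (fun s => Set.indicator {ω' : Omega3 | ω' 1 = true} (fun _ => (1 : ℝ≥0∞)) (theta3 s ω))
      = Set.indicator {s : ZMod 3 | ω (1 + s) = true} (fun _ => (1 : ℝ≥0∞)) := by
    funext s
    rfl
  rw [hint]
  rw [show lintegral (((xi3 ω) {0,1})⁻¹ • (xi3 ω).restrict {0,1})
        ({s : ZMod 3 | ω (1 + s) = true}.indicator fun _ => (1:ℝ≥0∞))
      = ∫⁻ s, ({s : ZMod 3 | ω (1 + s) = true}.indicator fun _ => (1:ℝ≥0∞)) s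
        ∂(((xi3 ω) {0,1})⁻¹ • (xi3 ω).restrict {0,1}) from rfl]
  rw [MeasureTheory.lintegral_indicator
    (show MeasurableSet {s : ZMod 3 | ω (1 + s) = true} from trivial) _]
  rw [MeasureTheory.setLIntegral_one]
  rw [Measure.smul_apply, Measure.restrict_apply
    (show MeasurableSet {s : ZMod 3 | ω (1 + s) = true} from trivial), smul_eq_mul]
  congr 1
  rw [Set.inter_comm]

lemma Q3_lintegral (f : Omega3 → ℝ≥0∞) :
    ∫⁻ ω, f ω ∂Q3 = 4⁻¹ * ∑ p : Bool × Bool, f (emb3 p) := by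
  rw [Q3, MeasureTheory.lintegral_map (measurable_of_countable f) (measurable_of_countable _),
    MeasureTheory.lintegral_smul_measure, MeasureTheory.lintegral_count, tsum_fintype]
  rfl

lemma Q3_apply : Q3 {ω' : Omega3 | ω' 1 = true} = 1 / 2 := by
  rw [Q3, Measure.map_apply (measurable_of_countable _)
    (Set.toFinite _).measurableSet, Measure.smul_apply]
  have h : (fun p : Bool × Bool => fun x : ZMod 3 =>
        if x = 0 then true else if x = 1 then p.1 else p.2) ⁻¹' {ω' : Omega3 | ω' 1 = true}
      = ↑({(true,true),(true,false)} : Finset (Bool × Bool)) := by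
    ext p
    rcases p with ⟨a,b⟩
    rcases a <;> rcases b <;> simp
  rw [h, Measure.count_apply_finset]
  rw [show (({(true,true),(true,false)} : Finset (Bool × Bool)).card : ℝ≥0∞) = 2 by rfl,
    smul_eq_mul]
  rw [← ENNReal.toReal_eq_toReal_iff' (by finiteness)
    (ENNReal.div_lt_top (by norm_num) (by norm_num)).ne]
  rw [ENNReal.toReal_mul, ENNReal.toReal_div]
  norm_num

/-- Example 6.5: for the Palm measure ℚ of the Bernoulli(1/2) point
process on `ℤ/3ℤ`, with `C = {0,1}` and `A = {ξ{1} = 1}`, one has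
`𝔼_ℚ[∫ 1_A(θ_s) T_C(0,ds)] = 3/8 ≠ 1/2 = ℚ(A)`: a Palm measure need not be invariant
under the single kernel `T_C`. -/
theorem stmt17 :
    (∫⁻ ω, ∫⁻ s, Set.indicator {ω' : Omega3 | ω' 1 = true} (fun _ => (1 : ℝ≥0∞)) (theta3 s ω)
        ∂(massKernelTC xi3 (Measure.dirac 0) ({0, 1} : Set (ZMod 3)) ω 0) ∂Q3
      = 3 / 8)
    ∧ Q3 {ω' : Omega3 | ω' 1 = true} = 1 / 2
    ∧ (3 / 8 : ℝ≥0∞) ≠ 1 / 2 := by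
  refine ⟨?_, Q3_apply, ?_⟩
  · rw [Q3_lintegral, Fintype.sum_prod_type, Fintype.sum_bool, Fintype.sum_bool,
      Fintype.sum_bool]
    rw [inner_eq _ rfl, inner_eq _ rfl, inner_eq _ rfl, inner_eq _ rfl]
    classical
    rw [xi3_apply, xi3_apply, xi3_apply, xi3_apply, xi3_apply, xi3_apply, xi3_apply, xi3_apply]
    simp only [emb3, Set.mem_inter_iff, Set.mem_insert_iff, Set.mem_singleton_iff,
      Set.mem_setOf_eq]
    simp only [show (1:ZMod 3) + 0 = 1 by decide, show (1:ZMod 3) + 1 = 2 by decide,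
      show (1:ZMod 3) + 2 = 0 by decide, eq_false (show (0:ZMod 3) ≠ 1 by decide),
      eq_false (show (1:ZMod 3) ≠ 0 by decide), eq_false (show (2:ZMod 3) ≠ 0 by decide),
      eq_false (show (2:ZMod 3) ≠ 1 by decide), Bool.false_eq_true, if_true, if_false, true_and, and_true,
      false_and, and_false, or_false, false_or, true_or, or_true, if_pos, eq_self_iff_true]
    rw [← ENNReal.toReal_eq_toReal_iff' (by finiteness)
      (ENNReal.div_lt_top (by norm_num) (by norm_num)).ne]
    rw [ENNReal.toReal_div]
    rw [ENNReal.toReal_mul, ENNReal.toReal_add (by finiteness) (by finiteness),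
      ENNReal.toReal_add (by finiteness) (by finiteness),
      ENNReal.toReal_add (by finiteness) (by finiteness)]
    simp only [ENNReal.toReal_mul, ENNReal.toReal_inv]
    norm_num
  · intro h
    have := congrArg ENNReal.toReal h
    norm_num [ENNReal.toReal_div] at this
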